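/- Let 𝒞=(C,w) be a positive-weighted tree with at least 3 vertices, and for a vertex x set t_x = (1/2)·min{ D_{x,y}(𝒞)+D_{x,z}(𝒞)−D_{y,z}(𝒞) : y,z ∈ V(C)∖{x}, y≠z }. Then: (1) if x is a leaf of C, then t_x equals the weight of the pendant edge incident to x; and (2) t_x = 0 if and only if x is not a leaf of C. -/
import Mathlib


open SimpleGraph

variable {V : Type*}

/-- weight of a walk: sum of the weights of its edges -/
noncomputable def walkWeight (G : SimpleGraph V) (w : Sym2 V → ℝ) {i j : V} (p : G.Walk i j) : ℝ :=
  (p.edges.map w).sum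

/-- the 2-weight: min over paths joining i and j -/
noncomputable def wdist (G : SimpleGraph V) (w : Sym2 V → ℝ) (i j : V) : ℝ :=
  sInf {x : ℝ | ∃ p : G.Walk i j, p.IsPath ∧ walkWeight G w p = x}

def Realizes (G : SimpleGraph V) (w : Sym2 V → ℝ) {i j : V} (p : G.Walk i j) : Prop :=
  p.IsPath ∧ walkWeight G w p = wdist G w i j

def UsefulEdge (G : SimpleGraph V) (w : Sym2 V → ℝ) (e : Sym2 V) : Prop :=
  ∃ a b : V, a ≠ b ∧ ∀ p : G.Walk a b, Realizes G w p → e ∈ p.edges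

def Pruned (G : SimpleGraph V) (w : Sym2 V → ℝ) : Prop :=
  ∀ e ∈ G.edgeSet, UsefulEdge G w e

def PosWeights (G : SimpleGraph V) (w : Sym2 V → ℝ) : Prop :=
  ∀ e ∈ G.edgeSet, 0 < w e

def Indec (G : SimpleGraph V) (w : Sym2 V → ℝ) (i j : V) : Prop :=
  ∀ z : V, z ≠ i → z ≠ j → wdist G w i j < wdist G w i z + wdist G w z j

def IsLeaf (G : SimpleGraph V) (v : V) : Prop := (G.neighborSet v).ncard = 1

def IsSnake (G : SimpleGraph V) : Prop :=
  G.IsTree ∧ {v : V | IsLeaf G v}.ncard = 2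

def IsCaterpillar (G : SimpleGraph V) : Prop :=
  G.IsTree ∧ ∃ (x₁ x₂ : V) (p : G.Walk x₁ x₂), p.IsPath ∧
    {v : V | v ∈ p.support} = {v : V | 2 ≤ (G.neighborSet v).ncard}

def IsPolygon {n : ℕ} [NeZero n] (G : SimpleGraph (Fin n)) : Prop :=
  ∃ σ : Equiv.Perm (Fin n), G.edgeSet = Set.range (fun i : Fin n => s(σ i, σ (i + 1)))

noncomputable def tmin (G : SimpleGraph V) (w : Sym2 V → ℝ) (x : V) : ℝ :=
  (1 / 2) * sInf {r : ℝ | ∃ y z : V, y ≠ x ∧ z ≠ x ∧ y ≠ z ∧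
    r = wdist G w x y + wdist G w x z - wdist G w y z}

def IsBipartiteOn (G : SimpleGraph V) (X Y : Set V) : Prop :=
  X ∩ Y = ∅ ∧ X ∪ Y = Set.univ ∧ ∀ a b : V, G.Adj a b → (a ∈ X ∧ b ∈ Y) ∨ (a ∈ Y ∧ b ∈ X)

noncomputable def chainSum {α : Type*} (D : α → α → ℝ) : List α → ℝ
  | [] => 0
  | [_] => 0
  | a :: b :: l => D a b + chainSum D (b :: l)

def FIndec {n : ℕ} (D : Fin n → Fin n → ℝ) (i j : Fin n) : Prop :=
  ∀ z : Fin n, z ≠ i → z ≠ j → D i j < D i z + D z j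

def TriangleIneq {n : ℕ} (D : Fin n → Fin n → ℝ) : Prop :=
  ∀ i j k : Fin n, i ≠ j → j ≠ k → i ≠ k → D i j ≤ D i k + D k j

def MaxTwice (x y z : ℝ) : Prop :=
  (x = y ∧ z ≤ x) ∨ (x = z ∧ y ≤ x) ∨ (y = z ∧ x ≤ y)

def FourPoint {n : ℕ} (D : Fin n → Fin n → ℝ) : Prop :=
  ∀ i j k h : Fin n, i ≠ j → i ≠ k → i ≠ h → j ≠ k → j ≠ h → k ≠ h →
    MaxTwice (D i j + D k h) (D i k + D j h) (D i h + D k j)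

def MedianFamily {n : ℕ} (D : Fin n → Fin n → ℝ) : Prop :=
  ∀ a b c : Fin n, ∃! m : Fin n,
    ∀ i ∈ ({a, b, c} : Set (Fin n)), ∀ j ∈ ({a, b, c} : Set (Fin n)), i ≠ j →
      D i j = D i m + D j m

noncomputable def tminF {n : ℕ} (D : Fin n → Fin n → ℝ) (x : Fin n) : ℝ :=
  (1 / 2) * sInf {r : ℝ | ∃ y z : Fin n, y ≠ x ∧ z ≠ x ∧ y ≠ z ∧ r = D x y + D x z - D y z}

def interiorSet {G : SimpleGraph V} {u v : V} (p : G.Walk u v) : Set V :=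
  {x : V | x ∈ p.support ∧ x ≠ u ∧ x ≠ v}


section AuxStmt17
variable {V : Type*} [DecidableEq V] {G : SimpleGraph V} {w : Sym2 V → ℝ}

private lemma edges_bypass_sublist' {u v : V} (p : G.Walk u v) :
    p.bypass.edges.Sublist p.edges := by
  induction p with
  | nil => simp [Walk.bypass]
  | @cons a b c h p ih =>
    rw [Walk.bypass]
    split_ifs with hs
    · have h1 : (p.bypass.dropUntil a hs).edges.Sublist p.bypass.edges := by
        conv_rhs => rw [← p.bypass.take_spec hs]
        rw [Walk.edges_append]
        exact List.sublist_append_right _ _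
      rw [Walk.edges_cons]
      exact (h1.trans ih).trans (List.sublist_cons_self _ _)
    · rw [Walk.edges_cons, Walk.edges_cons]
      exact ih.cons₂ _

private lemma walkWeight_nonneg' (hw : PosWeights G w) {i j : V} (p : G.Walk i j) :
    0 ≤ walkWeight G w p := by
  apply List.sum_nonneg
  intro a ha
  obtain ⟨e, he, rfl⟩ := List.mem_map.mp ha
  exact (hw e (p.edges_subset_edgeSet he)).le

private lemma wdist_eq' (hT : G.IsTree) {i j : V} (p : G.Walk i j) (hp : p.IsPath) :
    wdist G w i j = walkWeight G w p := by
  have hset : {x : ℝ | ∃ q : G.Walk i j, q.IsPath ∧ walkWeight G w q = x}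
      = {walkWeight G w p} := by
    ext x
    constructor
    · rintro ⟨q, hq, rfl⟩
      have := (hT.existsUnique_path i j).unique hq hp
      simp [this]
    · rintro rfl
      exact ⟨p, hp, rfl⟩
  rw [wdist, hset, csInf_singleton]

private lemma wdist_self' (hT : G.IsTree) (i : V) : wdist G w i i = 0 := by
  rw [wdist_eq' hT (Walk.nil) Walk.IsPath.nil]
  simp [walkWeight]

private lemma wdist_le_walkWeight' (hT : G.IsTree) (hw : PosWeights G w) {i j : V}
    (q : G.Walk i j) : wdist G w i j ≤ walkWeight G w q := by
  rw [wdist_eq' hT q.bypass q.bypass_isPath]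
  apply List.Sublist.sum_le_sum ((edges_bypass_sublist' q).map w)
  intro a ha
  obtain ⟨e, he, rfl⟩ := List.mem_map.mp ha
  exact (hw e (q.edges_subset_edgeSet he)).le

private lemma wdist_triangle' (hT : G.IsTree) (hw : PosWeights G w) (i j k : V) :
    wdist G w i k ≤ wdist G w i j + wdist G w j k := by
  obtain ⟨p₁, hp₁, -⟩ := hT.existsUnique_path i j
  obtain ⟨p₂, hp₂, -⟩ := hT.existsUnique_path j k
  rw [wdist_eq' hT p₁ hp₁, wdist_eq' hT p₂ hp₂]
  have := wdist_le_walkWeight' hT hw (p₁.append p₂)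
  simpa [walkWeight, Walk.edges_append] using this

private lemma wdist_symm' (hT : G.IsTree) (i j : V) :
    wdist G w i j = wdist G w j i := by
  obtain ⟨p, hp, -⟩ := hT.existsUnique_path i j
  rw [wdist_eq' hT p hp, wdist_eq' hT p.reverse hp.reverse]
  simp [walkWeight, Walk.edges_reverse, List.map_reverse, List.sum_reverse]

private lemma wdist_adj' (hT : G.IsTree) {i j : V} (h : G.Adj i j) :
    wdist G w i j = w s(i, j) := by
  have hp : (Walk.cons h Walk.nil).IsPath := by
    simp [Walk.cons_isPath_iff, h.ne]
  rw [wdist_eq' hT _ hp]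
  simp [walkWeight]

private lemma neighborSet_eq_of_leaf {x u : V} (hleaf : IsLeaf G x) (hxu : G.Adj x u) :
    G.neighborSet x = {u} := by
  obtain ⟨a, ha⟩ := Set.ncard_eq_one.mp hleaf
  have : u = a := by
    have : u ∈ G.neighborSet x := hxu
    rw [ha] at this
    simpa using this
  rw [ha, this]

private lemma wdist_leaf' (hT : G.IsTree) {x u y : V} (hleaf : IsLeaf G x)
    (hxu : G.Adj x u) (hxy : y ≠ x) :
    wdist G w x y = w s(x, u) + wdist G w u y := by
  obtain ⟨p, hp, -⟩ := hT.existsUnique_path x y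
  cases p with
  | nil => exact absurd rfl hxy
  | @cons _ b _ h q =>
    have hb : b = u := by
      have : b ∈ G.neighborSet x := h
      rw [neighborSet_eq_of_leaf hleaf hxu] at this
      simpa using this
    subst hb
    rw [Walk.cons_isPath_iff] at hp
    rw [wdist_eq' hT (Walk.cons h q) (by rw [Walk.cons_isPath_iff]; exact hp), wdist_eq' hT q hp.1]
    simp [walkWeight]

end AuxStmt17

private lemma exists_third' {n : ℕ} (hn : 3 ≤ n) (x u : Fin n) :
    ∃ z : Fin n, z ≠ x ∧ z ≠ u := by
  have hcard : 0 < (({x, u} : Finset (Fin n))ᶜ).card := by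
    rw [Finset.card_compl]
    have h2 : ({x, u} : Finset (Fin n)).card ≤ 2 :=
      (Finset.card_insert_le _ _).trans (by simp)
    have : Fintype.card (Fin n) = n := Fintype.card_fin n
    omega
  obtain ⟨z, hz⟩ := Finset.card_pos.mp hcard
  simp only [Finset.mem_compl, Finset.mem_insert, Finset.mem_singleton, not_or] at hz
  exact ⟨z, hz.1, hz.2⟩

private lemma exists_adj' {n : ℕ} (hn : 3 ≤ n) {C : SimpleGraph (Fin n)}
    (hT : C.IsTree) (x : Fin n) : ∃ u : Fin n, C.Adj x u := by
  obtain ⟨y, hy, -⟩ := exists_third' hn x x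
  obtain ⟨p⟩ := hT.isConnected.preconnected x y
  cases p with
  | nil => exact absurd rfl hy.symm
  | cons h q => exact ⟨_, h⟩

/-- In a positive-weighted tree with at least 3 vertices: if `x` is a leaf then `t x` equals
the weight of the pendant edge incident to `x`, and `t x = 0` iff `x` is not a leaf. -/
theorem stmt_17 {n : ℕ} (hn : 3 ≤ n) (C : SimpleGraph (Fin n)) (htree : C.IsTree)
    (w : Sym2 (Fin n) → ℝ) (hw : PosWeights C w) :
    (∀ x u : Fin n, IsLeaf C x → C.Adj x u → tmin C w x = w s(x, u)) ∧
      (∀ x : Fin n, tmin C w x = 0 ↔ ¬ IsLeaf C x) := by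
  classical
  have key : ∀ x u : Fin n, IsLeaf C x → C.Adj x u → tmin C w x = w s(x, u) := by
    intro x u hleaf hxu
    set S := {r : ℝ | ∃ y z : Fin n, y ≠ x ∧ z ≠ x ∧ y ≠ z ∧
      r = wdist C w x y + wdist C w x z - wdist C w y z} with hS
    have hlb : ∀ r ∈ S, 2 * w s(x, u) ≤ r := by
      rintro r ⟨y, z, hy, hz, hyz, rfl⟩
      rw [wdist_leaf' htree hleaf hxu hy, wdist_leaf' htree hleaf hxu hz]
      have ht : wdist C w y z ≤ wdist C w y u + wdist C w u z :=
        wdist_triangle' htree hw y u z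
      rw [wdist_symm' htree y u] at ht
      linarith
    have hmem : 2 * w s(x, u) ∈ S := by
      obtain ⟨z, hzx, hzu⟩ := exists_third' hn x u
      refine ⟨u, z, hxu.ne', hzx, Ne.symm hzu, ?_⟩
      rw [wdist_leaf' htree hleaf hxu hxu.ne', wdist_leaf' htree hleaf hxu hzx,
        wdist_self' htree u]
      ring
    have hinf : sInf S = 2 * w s(x, u) :=
      le_antisymm (csInf_le ⟨_, hlb⟩ hmem) (le_csInf ⟨_, hmem⟩ hlb)
    have : tmin C w x = (1 / 2) * sInf S := rfl
    rw [this, hinf]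
    ring
  refine ⟨key, fun x => ⟨?_, ?_⟩⟩
  · intro h0 hleaf
    obtain ⟨u, hu⟩ := exists_adj' hn htree x
    rw [key x u hleaf hu] at h0
    exact absurd h0 (ne_of_gt (hw _ (C.mem_edgeSet.mpr hu)))
  · intro hnl
    obtain ⟨u, hu⟩ := exists_adj' hn htree x
    have hfin : (C.neighborSet x).Finite := Set.toFinite _
    have h2 : 1 < (C.neighborSet x).ncard := by
      have hpos : 0 < (C.neighborSet x).ncard := (Set.ncard_pos hfin).mpr ⟨u, hu⟩
      have hne : (C.neighborSet x).ncard ≠ 1 := hnl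
      omega
    obtain ⟨a, b, ha, hb, hab⟩ := (Set.one_lt_ncard_iff hfin).mp h2
    have hxa : C.Adj x a := ha
    have hxb : C.Adj x b := hb
    set S := {r : ℝ | ∃ y z : Fin n, y ≠ x ∧ z ≠ x ∧ y ≠ z ∧
      r = wdist C w x y + wdist C w x z - wdist C w y z} with hS
    have hlb : ∀ r ∈ S, 0 ≤ r := by
      rintro r ⟨y, z, hy, hz, hyz, rfl⟩
      have ht : wdist C w y z ≤ wdist C w y x + wdist C w x z :=
        wdist_triangle' htree hw y x z
      rw [wdist_symm' htree y x] at ht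
      linarith
    have hmem : (0 : ℝ) ∈ S := by
      refine ⟨a, b, hxa.ne', hxb.ne', hab, ?_⟩
      have hab' : wdist C w a b = w s(a, x) + w s(x, b) := by
        have hp : (Walk.cons hxa.symm (Walk.cons hxb Walk.nil)).IsPath := by
          simp [Walk.cons_isPath_iff, hxb.ne, hxa.ne', hab]
        rw [wdist_eq' htree _ hp]
        simp [walkWeight]
      rw [wdist_adj' htree hxa, wdist_adj' htree hxb, hab', Sym2.eq_swap (a := a) (b := x)]
      ring
    have hinf : sInf S = 0 :=
      le_antisymm (csInf_le ⟨_, hlb⟩ hmem) (le_csInf ⟨_, hmem⟩ hlb)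
    have : tmin C w x = (1 / 2) * sInf S := rfl
    rw [this, hinf, mul_zero]
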